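/- Let (Y_α)_{α∈ℤ², |α|≥2} be real Gaussian random variables with mean 0 and variances σ²(α) ≥ C·|α|² for some C > 0, where |α| = |α₁| + |α₂|. Then P(⋂_{m₀≥1} ⋃_{|α|≥2} {|Y_α| < |α|^{−m₀}}) = 0; i.e., almost surely there exists m₀ such that |Y_α| ≥ |α|^{−m₀} for all α with |α| ≥ 2. -/

import Mathlib

open MeasureTheory ProbabilityTheory Real

/-- small ball estimate for the Gaussian measure -/
lemma aux_gauss_ball (v : NNReal) (hv : v ≠ 0) (t : ℝ) (ht : 0 ≤ t) :
    gaussianReal 0 v {x : ℝ | |x| < t} ≤ ENNReal.ofReal ((Real.sqrt (2 * π * v))⁻¹ * (2 * t)) := by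
  rw [gaussianReal_apply 0 hv]
  calc ∫⁻ x in {x : ℝ | |x| < t}, gaussianPDF 0 v x
      ≤ ∫⁻ _ in {x : ℝ | |x| < t}, ENNReal.ofReal ((Real.sqrt (2 * π * v))⁻¹) := by
        refine lintegral_mono fun x => ?_
        refine ENNReal.ofReal_le_ofReal ?_
        unfold gaussianPDFReal
        refine mul_le_of_le_one_right (by positivity) ?_
        refine Real.exp_le_one_iff.mpr ?_
        apply div_nonpos_of_nonpos_of_nonneg
        · simpa using sq_nonneg (x - 0)
        · positivity
    _ ≤ _ := by
        rw [setLIntegral_const]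
        have : {x : ℝ | |x| < t} = Set.Ioo (-t) t := by ext x; simp [abs_lt]
        rw [this, Real.volume_Ioo, ← ENNReal.ofReal_mul (by positivity)]
        apply ENNReal.ofReal_le_ofReal
        nlinarith [Real.sqrt_nonneg (2 * π * v), inv_nonneg.mpr (Real.sqrt_nonneg (2 * π * v))]

lemma aux_summable :
    Summable (fun p : ℤ × ℤ => (1 + |(p.1 : ℝ)|)⁻¹ ^ 3 * (1 + |(p.2 : ℝ)|)⁻¹ ^ 3) := by
  have key : Summable (fun n : ℕ => (1 + (n : ℝ))⁻¹ ^ 3) := by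
    have h1 : Summable (fun n : ℕ => 1 / (n : ℝ) ^ 3) :=
      Real.summable_one_div_nat_pow.mpr (by norm_num)
    have h2 := (summable_nat_add_iff 1).mpr h1
    refine h2.congr fun n => ?_
    push_cast
    rw [one_div, inv_pow]
    ring_nf
  have hg : Summable (fun x : ℤ => (1 + |(x : ℝ)|)⁻¹ ^ 3) := by
    refine Summable.of_nat_of_neg ?_ ?_ <;>
      · refine key.congr fun n => ?_
        push_cast
        simp [abs_of_nonneg, Nat.cast_nonneg]
  exact hg.mul_of_nonneg hg (fun x => by positivity) (fun x => by positivity)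

lemma aux_pow {ra rb : ℝ} (ha : 0 ≤ ra) (hb : 0 ≤ rb) (h2 : 2 ≤ ra + rb) (k : ℕ) :
    ((ra + rb) ^ (k + 6))⁻¹ ≤ (2⁻¹ : ℝ) ^ k * ((1 + ra)⁻¹ ^ 3 * (1 + rb)⁻¹ ^ 3) := by
  have hN : 0 < ra + rb := by linarith
  have hquad : (1 + ra) * (1 + rb) ≤ (ra + rb) ^ 2 := by
    nlinarith [sq_nonneg (ra - rb), sq_nonneg (ra + rb - 2)]
  have key : 2 ^ k * ((1 + ra) * (1 + rb)) ^ 3 ≤ (ra + rb) ^ (k + 6) := by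
    have hpk : (2 : ℝ) ^ k ≤ (ra + rb) ^ k := pow_le_pow_left₀ (by norm_num) h2 k
    have hp3 : ((1 + ra) * (1 + rb)) ^ 3 ≤ ((ra + rb) ^ 2) ^ 3 :=
      pow_le_pow_left₀ (by positivity) hquad 3
    calc 2 ^ k * ((1 + ra) * (1 + rb)) ^ 3 ≤ (ra + rb) ^ k * ((ra + rb) ^ 2) ^ 3 := by
          apply mul_le_mul hpk hp3 (by positivity) (by positivity)
      _ = (ra + rb) ^ (k + 6) := by ring
  have hrw : (2⁻¹ : ℝ) ^ k * ((1 + ra)⁻¹ ^ 3 * (1 + rb)⁻¹ ^ 3)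
      = (2 ^ k * ((1 + ra) * (1 + rb)) ^ 3)⁻¹ := by
    rw [mul_pow, mul_inv, mul_inv, inv_pow, inv_pow, inv_pow]
  rw [hrw]
  exact inv_anti₀ (by positivity) key

/-- If `(Y_α)_{|α|≥2}` are centered real Gaussians with variances `σ²(α) ≥ C|α|²`, then
almost surely the vector of values is Diophantine: the event that for every `m₀ ≥ 1`
some `α` with `|α| ≥ 2` has `|Y_α| < |α|^{-m₀}` is a null event. -/
theorem stmt_11 {Ω : Type*} [MeasurableSpace Ω] (P : Measure Ω) [IsProbabilityMeasure P]
    (Y : {α : ℤ × ℤ // 2 ≤ |α.1| + |α.2|} → Ω → ℝ)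
    (v : {α : ℤ × ℤ // 2 ≤ |α.1| + |α.2|} → NNReal) (C : ℝ) (hC : 0 < C)
    (hY : ∀ α, Measure.map (Y α) P = gaussianReal 0 (v α))
    (hv : ∀ α, C * ((|α.val.1| + |α.val.2| : ℤ) : ℝ) ^ 2 ≤ (v α : ℝ)) :
    P (⋂ m₀ : ℕ, ⋂ (_ : 1 ≤ m₀), ⋃ α : {α : ℤ × ℤ // 2 ≤ |α.1| + |α.2|},
        {ω | |Y α ω| < ((|α.val.1| + |α.val.2| : ℤ) : ℝ) ^ (-(m₀ : ℤ))}) = 0 := by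

  classical
  set N : {α : ℤ × ℤ // 2 ≤ |α.1| + |α.2|} → ℝ :=
    fun α => ((|α.val.1| + |α.val.2| : ℤ) : ℝ) with hNdef
  have hN2 : ∀ α, 2 ≤ N α := fun α => by
    show (2 : ℝ) ≤ ((|α.val.1| + |α.val.2| : ℤ) : ℝ)
    exact_mod_cast α.prop
  have hNpos : ∀ α, 0 < N α := fun α => lt_of_lt_of_le two_pos (hN2 α)
  have hvpos : ∀ α, 0 < (v α : ℝ) := fun α =>
    lt_of_lt_of_le (mul_pos hC (pow_pos (hNpos α) 2)) (hv α)
  have hvne : ∀ α, v α ≠ 0 := fun α => NNReal.coe_ne_zero.mp (hvpos α).ne'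
  have hmap : ∀ α (t : ℝ), P {ω | |Y α ω| < t} = gaussianReal 0 (v α) {x | |x| < t} := by
    intro α t
    have hae : AEMeasurable (Y α) P :=
      aemeasurable_of_map_neZero (by rw [hY α]; infer_instance)
    have hms : MeasurableSet {x : ℝ | |x| < t} :=
      measurableSet_lt continuous_abs.measurable measurable_const
    rw [← hY α, Measure.map_apply_of_aemeasurable hae hms]
    rfl
  set G : ℤ × ℤ → ℝ := fun p => (1 + |(p.1 : ℝ)|)⁻¹ ^ 3 * (1 + |(p.2 : ℝ)|)⁻¹ ^ 3 with hGdef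
  have hGnn : ∀ p, 0 ≤ G p := fun p => by positivity
  set c1 : ℝ := 2 / Real.sqrt (2 * π * C) with hc1
  have hc1nn : 0 ≤ c1 := by positivity
  have key : ∀ (k : ℕ) (α), P {ω | |Y α ω| < N α ^ (-((k + 5 : ℕ) : ℤ))} ≤
      ENNReal.ofReal (c1 * ((2⁻¹ : ℝ) ^ k * G α.val)) := by
    intro k α
    set t : ℝ := N α ^ (-((k + 5 : ℕ) : ℤ)) with htdef
    have htpos : 0 < t := zpow_pos (hNpos α) _
    rw [hmap α t]
    refine (aux_gauss_ball (v α) (hvne α) t htpos.le).trans (ENNReal.ofReal_le_ofReal ?_)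
    have hsq : Real.sqrt (2 * π * C) * N α ≤ Real.sqrt (2 * π * (v α)) := by
      rw [show Real.sqrt (2 * π * C) * N α = Real.sqrt (2 * π * C * (N α) ^ 2) by
        rw [eq_comm, Real.sqrt_mul (by positivity : (0:ℝ) ≤ 2 * π * C) ((N α) ^ 2),
          Real.sqrt_sq (hNpos α).le]]
      refine Real.sqrt_le_sqrt ?_
      have := hv α
      nlinarith [Real.pi_pos]
    have h1 : (Real.sqrt (2 * π * (v α)))⁻¹ ≤ (Real.sqrt (2 * π * C) * N α)⁻¹ :=
      inv_anti₀ (mul_pos (Real.sqrt_pos.mpr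
        (mul_pos (mul_pos two_pos Real.pi_pos) hC)) (hNpos α)) hsq
    have ht' : t = ((N α) ^ (k + 5))⁻¹ := by rw [htdef, zpow_neg, zpow_natCast]
    have h2 : (N α)⁻¹ * t ≤ (2⁻¹ : ℝ) ^ k * G α.val := by
      have hmul : (N α)⁻¹ * t = ((N α) ^ (k + 6))⁻¹ := by
        rw [ht', ← mul_inv]
        congr 1
        ring
      rw [hmul]
      have hNeq : N α = |(α.val.1 : ℝ)| + |(α.val.2 : ℝ)| := by
        rw [hNdef]; push_cast; ring
      rw [hNeq]
      exact aux_pow (abs_nonneg _) (abs_nonneg _) (by rw [← hNeq]; exact hN2 α) k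
    calc (Real.sqrt (2 * π * (v α)))⁻¹ * (2 * t)
        ≤ (Real.sqrt (2 * π * C) * N α)⁻¹ * (2 * t) := by
          apply mul_le_mul_of_nonneg_right h1 (by positivity)
      _ = c1 * ((N α)⁻¹ * t) := by rw [hc1, mul_inv]; ring
      _ ≤ c1 * ((2⁻¹ : ℝ) ^ k * G α.val) := by
          exact mul_le_mul_of_nonneg_left h2 hc1nn
  have hGsum := aux_summable
  have main : ∀ k : ℕ,
      P (⋂ m₀ : ℕ, ⋂ (_ : 1 ≤ m₀), ⋃ α : {α : ℤ × ℤ // 2 ≤ |α.1| + |α.2|},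
        {ω | |Y α ω| < ((|α.val.1| + |α.val.2| : ℤ) : ℝ) ^ (-(m₀ : ℤ))}) ≤
      ENNReal.ofReal c1 * ENNReal.ofReal (∑' p : ℤ × ℤ, G p) * ENNReal.ofReal (2⁻¹ : ℝ) ^ k := by
    intro k
    calc P (⋂ m₀ : ℕ, ⋂ (_ : 1 ≤ m₀), ⋃ α : {α : ℤ × ℤ // 2 ≤ |α.1| + |α.2|},
          {ω | |Y α ω| < ((|α.val.1| + |α.val.2| : ℤ) : ℝ) ^ (-(m₀ : ℤ))})
        ≤ P (⋃ α : {α : ℤ × ℤ // 2 ≤ |α.1| + |α.2|},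
          {ω | |Y α ω| < N α ^ (-((k + 5 : ℕ) : ℤ))}) := by
          apply measure_mono
          exact (Set.iInter_subset _ (k + 5)).trans (Set.iInter_subset _ (by norm_num))
      _ ≤ ∑' α, P {ω | |Y α ω| < N α ^ (-((k + 5 : ℕ) : ℤ))} := measure_iUnion_le _
      _ ≤ ∑' α : {α : ℤ × ℤ // 2 ≤ |α.1| + |α.2|},
            ENNReal.ofReal (c1 * ((2⁻¹ : ℝ) ^ k * G α.val)) := ENNReal.tsum_le_tsum (key k)
      _ = ∑' α : {α : ℤ × ℤ // 2 ≤ |α.1| + |α.2|},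
            ENNReal.ofReal (c1 * (2⁻¹ : ℝ) ^ k) * ENNReal.ofReal (G α.val) := by
          congr 1
          ext α
          rw [← ENNReal.ofReal_mul (by positivity)]
          ring_nf
      _ = ENNReal.ofReal (c1 * (2⁻¹ : ℝ) ^ k) *
            ∑' α : {α : ℤ × ℤ // 2 ≤ |α.1| + |α.2|}, ENNReal.ofReal (G α.val) :=
          ENNReal.tsum_mul_left
      _ ≤ ENNReal.ofReal (c1 * (2⁻¹ : ℝ) ^ k) * ∑' p : ℤ × ℤ, ENNReal.ofReal (G p) :=
          mul_le_mul_right (ENNReal.tsum_comp_le_tsum_of_injective Subtype.coe_injective _) _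
      _ = ENNReal.ofReal c1 * ENNReal.ofReal (∑' p : ℤ × ℤ, G p) *
            ENNReal.ofReal (2⁻¹ : ℝ) ^ k := by
          rw [← ENNReal.ofReal_tsum_of_nonneg hGnn hGsum,
            ENNReal.ofReal_mul hc1nn, ENNReal.ofReal_pow (by norm_num)]
          ring
  have hlim : Filter.Tendsto
      (fun k : ℕ => ENNReal.ofReal c1 * ENNReal.ofReal (∑' p : ℤ × ℤ, G p) *
        ENNReal.ofReal (2⁻¹ : ℝ) ^ k) Filter.atTop (nhds 0) := by
    have h0 : Filter.Tendsto (fun k : ℕ => ENNReal.ofReal (2⁻¹ : ℝ) ^ k)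
        Filter.atTop (nhds 0) :=
      ENNReal.tendsto_pow_atTop_nhds_zero_of_lt_one (ENNReal.ofReal_lt_one.mpr (by norm_num))
    have h1 := ENNReal.Tendsto.const_mul
      (a := ENNReal.ofReal c1 * ENNReal.ofReal (∑' p : ℤ × ℤ, G p)) h0
      (Or.inr (ENNReal.mul_ne_top ENNReal.ofReal_ne_top ENNReal.ofReal_ne_top))
    simpa using h1
  exact le_antisymm (ge_of_tendsto' hlim main) zero_le
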